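/- In the identically-ordered round-robin allocation (agent i receives A_i = {e_{i+jn} : j ≥ 0, i+jn ≤ m} where sizes are non-increasing in the item index for every agent), for every agent i and every j ≤ i, the bin covering value of A_j under agent i's sizes is at least the bin covering value of A_n under agent i's sizes: v_i(A_j) ≥ v_i(A_n). -/

import Mathlib

/-- `S` covers `κ` unit-capacity bins under weights `w`: there are `κ` pairwise
disjoint subsets of `S`, each of total weight at least 1. -/
def Covers {ι : Type*} (w : ι → ℝ) (S : Finset ι) (κ : ℕ) : Prop :=
  ∃ C : Fin κ → Finset ι, (∀ b, C b ⊆ S) ∧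
    (∀ b b', b ≠ b' → Disjoint (C b) (C b')) ∧ ∀ b, 1 ≤ ∑ x ∈ C b, w x

/-- The bin covering value: the maximum number of bins coverable by `S`. -/
noncomputable def coverVal {ι : Type*} (w : ι → ℝ) (S : Finset ι) : ℕ :=
  sSup {κ | Covers w S κ}

lemma covers_zero {ι : Type*} (w : ι → ℝ) (S : Finset ι) : Covers w S 0 :=
  ⟨fun b => b.elim0, fun b => b.elim0, fun b => b.elim0, fun b => b.elim0⟩

lemma covers_le_card {ι : Type*} [DecidableEq ι] (w : ι → ℝ) (S : Finset ι) {κ : ℕ}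
    (h : Covers w S κ) : κ ≤ S.card := by
  obtain ⟨C, hsub, hdisj, hsum⟩ := h
  have hne : ∀ b, (C b).Nonempty := by
    intro b
    rcases (C b).eq_empty_or_nonempty with h | h
    · exfalso
      have := hsum b
      rw [h, Finset.sum_empty] at this
      linarith
    · exact h
  choose x hx using hne
  have hxin : ∀ b ∈ (Finset.univ : Finset (Fin κ)), x b ∈ S := fun b _ => hsub b (hx b)
  have hinj : Set.InjOn x (Finset.univ : Finset (Fin κ)) := by
    intro b _ b' _ hbe
    by_contra hne'
    exact Finset.disjoint_left.mp (hdisj b b' hne') (hx b) (hbe ▸ hx b')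
  have := Finset.card_le_card_of_injOn x hxin hinj
  simpa using this

lemma covers_map {ι : Type*} [DecidableEq ι] (w : ι → ℝ) (S T : Finset ι) (f : ι → ι)
    (hinj : Set.InjOn f S) (hmap : ∀ x ∈ S, f x ∈ T)
    (hw : ∀ x ∈ S, w x ≤ w (f x)) {κ : ℕ} (h : Covers w S κ) : Covers w T κ := by
  obtain ⟨C, hsub, hdisj, hsum⟩ := h
  refine ⟨fun b => (C b).image f, ?_, ?_, ?_⟩
  · intro b y hy
    obtain ⟨x, hx, rfl⟩ := Finset.mem_image.mp hy
    exact hmap x (hsub b hx)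
  · intro b b' hbb
    rw [Finset.disjoint_left]
    intro a ha ha'
    obtain ⟨x, hx, rfl⟩ := Finset.mem_image.mp ha
    obtain ⟨y, hy, hxy⟩ := Finset.mem_image.mp ha'
    have hyx : y = x := hinj (hsub b' hy) (hsub b hx) hxy
    exact Finset.disjoint_left.mp (hdisj b b' hbb) hx (hyx ▸ hy)
  · intro b
    rw [Finset.sum_image (fun x hx y hy => hinj (hsub b hx) (hsub b hy))]
    calc (1:ℝ) ≤ ∑ x ∈ C b, w x := hsum b
      _ ≤ ∑ x ∈ C b, w (f x) := Finset.sum_le_sum (fun x hx => hw x (hsub b hx))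

theorem stmt15 (n m : ℕ) (hn : 1 ≤ n) (s : Fin n → Fin m → ℝ)
    (hnn : ∀ i e, 0 ≤ s i e)
    (hIDO : ∀ i : Fin n, ∀ e e' : Fin m, e ≤ e' → s i e' ≤ s i e)
    (A : Fin n → Finset (Fin m))
    (hA : ∀ j : Fin n, A j = Finset.univ.filter (fun e : Fin m => e.val % n = j.val)) :
    ∀ i j : Fin n, j ≤ i →
      coverVal (s i) (A ⟨n - 1, by omega⟩) ≤ coverVal (s i) (A j) := by
  intro i j _
  have hjlt : j.val < n := j.isLt
  set c : ℕ := n - 1 - j.val with hc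
  have hcle : c ≤ n - 1 := Nat.sub_le _ _
  set f : Fin m → Fin m := fun e => ⟨e.val - c, lt_of_le_of_lt (Nat.sub_le _ _) e.isLt⟩ with hf
  have hmemS : ∀ e : Fin m, e ∈ A ⟨n - 1, by omega⟩ ↔ e.val % n = n - 1 := by
    intro e
    rw [hA]
    simp
  have hge : ∀ e : Fin m, e.val % n = n - 1 → n - 1 ≤ e.val := by
    intro e he
    have := Nat.mod_le e.val n
    omega
  have hmap : ∀ e ∈ A ⟨n - 1, by omega⟩, f e ∈ A j := by
    intro e he
    rw [hmemS] at he
    rw [hA]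
    simp only [Finset.mem_filter, Finset.mem_univ, true_and]
    have hq := Nat.div_add_mod e.val n
    have heq : e.val - c = n * (e.val / n) + j.val := by omega
    show (e.val - c) % n = j.val
    rw [heq, Nat.mul_add_mod, Nat.mod_eq_of_lt hjlt]
  have hinj : Set.InjOn f (A ⟨n - 1, by omega⟩ : Finset (Fin m)) := by
    intro e he e' he' hee
    rw [Finset.mem_coe, hmemS] at he he'
    have h1 := hge e he
    have h2 := hge e' he'
    have : e.val - c = e'.val - c := congrArg Fin.val hee
    exact Fin.ext (by omega)
  have hw : ∀ e ∈ A ⟨n - 1, by omega⟩, s i e ≤ s i (f e) := by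
    intro e _
    exact hIDO i (f e) e (Fin.le_def.mpr (Nat.sub_le _ _))
  unfold coverVal
  apply csSup_le_csSup
  · exact ⟨(A j).card, fun κ hκ => covers_le_card _ _ hκ⟩
  · exact ⟨0, covers_zero _ _⟩
  · intro κ hκ
    exact covers_map (s i) _ _ f hinj hmap hw hκ
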